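/- Let S be a nonempty compact convex subset of [0,1]^n and let B be a nonempty set of vectors β ∈ ℝ^n with β_j ≥ 1 for all j. For β ∈ B set d_β = Σ_j β_j, σ(β) = d_β + min_{x∈S} ( ∏_j x_j^{α_j} − Σ_j β_j x_j ), and define the convex underestimator f_B(x) = max{ 0, sup_{β∈B} ( σ(β) + Σ_j β_j (x_j − 1) ) }. Suppose there is an index j₀ such that α_{j₀} ≤ β_{j₀} for every β ∈ B. Then for every x ∈ S, ∏_{j=1}^n x_j^{α_j} − f_B(x) ≤ inf_{β∈B} (1 − σ(β)/d_β)^{d_β / r(β,α)}, where r(β,α) = max_{1≤j≤n} β_j/α_j. -/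

import Mathlib

private lemma aux_rpow_sub {u v q D : ℝ} (hv0 : 0 ≤ v) (hvu : v ≤ u) (hu1 : u ≤ 1)
    (hq1 : 1 ≤ q) (hqD : q ≤ D) : u ^ q - v ^ q ≤ D * (u - v) := by
  have hu0 : 0 ≤ u := hv0.trans hvu
  rcases hu0.eq_or_lt with h | hu
  · have hv : v = 0 := le_antisymm (h ▸ hvu) hv0
    rw [← h, hv, Real.zero_rpow (by linarith : q ≠ 0)]
    simp
  · have hs : (-1 : ℝ) ≤ v / u - 1 := by
      have : 0 ≤ v / u := div_nonneg hv0 hu0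
      linarith
    have hber := one_add_mul_self_le_rpow_one_add hs hq1
    have h1 : 1 + (v / u - 1) = v / u := by ring
    rw [h1, Real.div_rpow hv0 hu0] at hber
    have huq : 0 < u ^ q := Real.rpow_pos_of_pos hu q
    have h3 : u ^ q * (1 + q * (v / u - 1)) ≤ v ^ q := by
      calc u ^ q * (1 + q * (v / u - 1)) ≤ u ^ q * (v ^ q / u ^ q) :=
            mul_le_mul_of_nonneg_left hber huq.le
        _ = v ^ q := by field_simp
    have key : u ^ q * (1 + q * (v / u - 1)) = u ^ q - q * (u ^ q / u) * (u - v) := by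
      field_simp
      ring
    have h5 : u ^ q / u ≤ 1 := by
      rw [← Real.rpow_sub_one hu.ne']
      exact Real.rpow_le_one hu0 hu1 (by linarith)
    have h6 : q * (u ^ q / u) * (u - v) ≤ q * 1 * (u - v) := by
      apply mul_le_mul_of_nonneg_right _ (sub_nonneg.2 hvu)
      exact mul_le_mul_of_nonneg_left h5 (by linarith)
    have h7 : q * 1 * (u - v) ≤ D * (u - v) := by
      apply mul_le_mul_of_nonneg_right _ (sub_nonneg.2 hvu)
      linarith
    linarith [key ▸ h3]

/-- Error bound for a convex underestimator given as a pointwise supremum of linear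
underestimators of the monomial over `S ⊆ [0,1]^n`. -/
theorem stmt13 (n : ℕ) (hn : 1 ≤ n) (α : Fin n → ℕ) (hα : ∀ j, 1 ≤ α j)
    (d : ℕ) (hd : d = ∑ j, α j) (hd2 : 2 ≤ d)
    (S : Set (Fin n → ℝ)) (hS : S.Nonempty) (hScompact : IsCompact S)
    (hSconvex : Convex ℝ S) (hSsub : S ⊆ Set.Icc 0 1)
    (B : Set (Fin n → ℝ)) (hB : B.Nonempty) (hB1 : ∀ β ∈ B, ∀ j, 1 ≤ β j)
    (dβ : (Fin n → ℝ) → ℝ) (hdβ : ∀ β, dβ β = ∑ j, β j)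
    (sig : (Fin n → ℝ) → ℝ)
    (hsig : ∀ β, sig β = dβ β +
      sInf ((fun x : Fin n → ℝ => (∏ j, x j ^ α j) - ∑ j, β j * x j) '' S))
    (fB : (Fin n → ℝ) → ℝ)
    (hfB : ∀ x, fB x = max 0
      (⨆ β : B, (sig β + ∑ j, (β : Fin n → ℝ) j * (x j - 1))))
    (rr : (Fin n → ℝ) → ℝ) (hrr : ∀ β, rr β = ⨆ j, β j / (α j : ℝ))
    (j₀ : Fin n) (hj₀ : ∀ β ∈ B, (α j₀ : ℝ) ≤ β j₀) :
    ∀ x ∈ S, (∏ j, x j ^ α j) - fB x ≤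
      ⨅ β : B, (1 - sig β / dβ β) ^ (dβ β / rr β) := by
  have hFn : Nonempty (Fin n) := ⟨⟨0, hn⟩⟩
  have hBne : Nonempty B := hB.to_subtype
  intro x hx
  have hx01 := hSsub hx
  have hx0 : ∀ j, 0 ≤ x j := fun j => hx01.1 j
  have hx1 : ∀ j, x j ≤ 1 := fun j => hx01.2 j
  have hf0 : ∀ y ∈ S, 0 ≤ ∏ j, y j ^ α j := fun y hy =>
    Finset.prod_nonneg fun j _ => pow_nonneg ((hSsub hy).1 j) _
  -- lower bound for the image sets
  have hlb : ∀ β' : Fin n → ℝ, (∀ j, 1 ≤ β' j) →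
      ∀ z ∈ (fun y : Fin n → ℝ => (∏ j, y j ^ α j) - ∑ j, β' j * y j) '' S,
        -(∑ j, β' j) ≤ z := by
    rintro β' h1 z ⟨y, hy, rfl⟩
    show -(∑ j, β' j) ≤ (∏ j, y j ^ α j) - ∑ j, β' j * y j
    have hy01 := hSsub hy
    have h2 : ∑ j, β' j * y j ≤ ∑ j, β' j := Finset.sum_le_sum fun j _ => by
      have h3 : y j ≤ 1 := hy01.2 j
      have h4 : (0:ℝ) ≤ y j := hy01.1 j
      nlinarith [h1 j]
    have := hf0 y hy
    linarith
  have hbdd : ∀ β' : Fin n → ℝ, (∀ j, 1 ≤ β' j) →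
      BddBelow ((fun y : Fin n → ℝ => (∏ j, y j ^ α j) - ∑ j, β' j * y j) '' S) :=
    fun β' h1 => ⟨-(∑ j, β' j), fun z hz => hlb β' h1 z hz⟩
  have hsinfle : ∀ β' : Fin n → ℝ, (∀ j, 1 ≤ β' j) →
      sInf ((fun y : Fin n → ℝ => (∏ j, y j ^ α j) - ∑ j, β' j * y j) '' S)
        ≤ (∏ j, x j ^ α j) - ∑ j, β' j * x j :=
    fun β' h1 => csInf_le (hbdd β' h1) ⟨x, hx, rfl⟩
  -- lower bounds on fB x
  have hfB0 : 0 ≤ fB x := by rw [hfB]; exact le_max_left _ _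
  have hsum_sub : ∀ β' : Fin n → ℝ,
      ∑ j, β' j * (x j - 1) = (∑ j, β' j * x j) - ∑ j, β' j := by
    intro β'
    rw [← Finset.sum_sub_distrib]
    exact Finset.sum_congr rfl fun j _ => by ring
  have hsup_ub : ∀ b : B, sig b + ∑ j, (b : Fin n → ℝ) j * (x j - 1) ≤ ∏ j, x j ^ α j := by
    rintro ⟨β', hβ'⟩
    show sig β' + ∑ j, β' j * (x j - 1) ≤ ∏ j, x j ^ α j
    have h1 := hB1 β' hβ'
    have h2 := hsinfle β' h1
    rw [hsig β', hdβ β', hsum_sub β']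
    linarith
  have hbddsup : BddAbove (Set.range fun b : B =>
      sig b + ∑ j, (b : Fin n → ℝ) j * (x j - 1)) :=
    ⟨∏ j, x j ^ α j, by rintro z ⟨b, rfl⟩; exact hsup_ub b⟩
  have hfBle : ∀ b : B, sig b + ∑ j, (b : Fin n → ℝ) j * (x j - 1) ≤ fB x := fun b => by
    rw [hfB]
    exact le_trans (le_ciSup hbddsup b) (le_max_right _ _)
  -- reduce to a single β
  apply le_ciInf
  rintro ⟨β, hβ⟩
  show (∏ j, x j ^ α j) - fB x ≤ (1 - sig β / dβ β) ^ (dβ β / rr β)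
  have hβ1 := hB1 β hβ
  set D : ℝ := ∑ j, β j with hD
  have hD1 : (1 : ℝ) ≤ D := by
    have h1 : (1 : ℝ) ≤ ∑ _j : Fin n, (1 : ℝ) := by
      rw [Finset.sum_const]
      simp only [Finset.card_univ, Fintype.card_fin, nsmul_eq_mul, mul_one]
      exact_mod_cast hn
    exact h1.trans (Finset.sum_le_sum fun j _ => hβ1 j)
  have hDpos : (0 : ℝ) < D := by linarith
  set T : ℝ := ∑ j, β j * x j with hT
  have hT0 : 0 ≤ T := Finset.sum_nonneg fun j _ =>
    mul_nonneg (by linarith [hβ1 j]) (hx0 j)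
  have hTD : T ≤ D := Finset.sum_le_sum fun j _ => by nlinarith [hβ1 j, hx0 j, hx1 j]
  set m : ℝ := sInf ((fun y : Fin n → ℝ => (∏ j, y j ^ α j) - ∑ j, β j * y j) '' S)
    with hm
  have hsigβ : sig β = D + m := by rw [hsig β, hdβ β]
  have hdβ' : dβ β = D := hdβ β
  have hmD : -D ≤ m := le_csInf (hS.image _) (hlb β hβ1)
  have hmx : m ≤ (∏ j, x j ^ α j) - T := hsinfle β hβ1
  -- m ≤ 0
  have hfxj : (∏ j, x j ^ α j) ≤ x j₀ := by
    calc (∏ j, x j ^ α j) ≤ ∏ j, (if j = j₀ then x j₀ else 1) := by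
          apply Finset.prod_le_prod (fun j _ => pow_nonneg (hx0 j) _)
          intro j _
          by_cases hj : j = j₀
          · subst hj
            simp only [if_pos rfl]
            exact pow_le_of_le_one (hx0 j) (hx1 j) (Nat.one_le_iff_ne_zero.mp (hα j))
          · simp only [if_neg hj]
            exact pow_le_one₀ (hx0 j) (hx1 j)
      _ = x j₀ := by simp
  have hm0 : m ≤ 0 := by
    have h1 : β j₀ * x j₀ ≤ T :=
      Finset.single_le_sum (f := fun j => β j * x j)
        (fun j _ => mul_nonneg (by linarith [hβ1 j]) (hx0 j)) (Finset.mem_univ j₀)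
    have h2 : x j₀ ≤ β j₀ * x j₀ := le_mul_of_one_le_left (hx0 j₀) (hβ1 j₀)
    linarith
  -- facts about rr β
  have hα0 : ∀ j, (0 : ℝ) < (α j : ℝ) := fun j => by exact_mod_cast hα j
  have hrub : ∀ j, β j / (α j : ℝ) ≤ rr β := by
    intro j
    rw [hrr]
    exact le_ciSup (f := fun j => β j / (α j : ℝ)) (Set.Finite.bddAbove (Set.finite_range _)) j
  have hr1 : 1 ≤ rr β := by
    refine le_trans ?_ (hrub j₀)
    rw [le_div_iff₀ (hα0 j₀)]
    simpa using hj₀ β hβ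
  have hrpos : 0 < rr β := by linarith
  have hrD : rr β ≤ D := by
    rw [hrr]
    apply ciSup_le
    intro j
    calc β j / (α j : ℝ) ≤ β j := by
          apply div_le_self (by linarith [hβ1 j])
          exact_mod_cast hα j
      _ ≤ D := Finset.single_le_sum (f := fun j => β j)
          (fun j _ => by linarith [hβ1 j]) (Finset.mem_univ j)
  set q : ℝ := D / rr β with hq
  have hq1 : 1 ≤ q := (one_le_div hrpos).2 hrD
  have hqD : q ≤ D := div_le_self (by linarith) hr1
  -- AM-GM
  have hamgm : ∏ j, x j ^ (β j / D) ≤ T / D := by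
    have h1 := Real.geom_mean_le_arith_mean_weighted Finset.univ (fun j => β j / D) x
      (fun j _ => div_nonneg (by linarith [hβ1 j]) hDpos.le)
      (by rw [← Finset.sum_div, ← hD, div_self hDpos.ne']) (fun j _ => hx0 j)
    calc ∏ j, x j ^ (β j / D) ≤ ∑ j, (β j / D) * x j := h1
      _ = T / D := by
          rw [hT, Finset.sum_div]
          exact Finset.sum_congr rfl fun j _ => by ring
  have hfxq : (∏ j, x j ^ α j) ≤ (T / D) ^ q := by
    have step1 : ∀ j, x j ^ α j ≤ x j ^ (β j / rr β) := by
      intro j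
      rw [← Real.rpow_natCast (x j) (α j)]
      apply Real.rpow_le_rpow_of_exponent_ge' (hx0 j) (hx1 j)
      · exact div_nonneg (by linarith [hβ1 j]) hrpos.le
      · rw [div_le_iff₀ hrpos]
        have h2 := hrub j
        rw [div_le_iff₀ (hα0 j)] at h2
        linarith
    calc (∏ j, x j ^ α j) ≤ ∏ j, x j ^ (β j / rr β) :=
          Finset.prod_le_prod (fun j _ => pow_nonneg (hx0 j) _) (fun j _ => step1 j)
      _ = ∏ j, (x j ^ (β j / D)) ^ q := by
          refine Finset.prod_congr rfl fun j _ => ?_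
          rw [← Real.rpow_mul (hx0 j)]
          congr 1
          rw [hq, div_mul_div_comm, mul_comm (β j) D, mul_div_mul_left _ _ hDpos.ne']
      _ = (∏ j, x j ^ (β j / D)) ^ q :=
          Real.finset_prod_rpow Finset.univ _ (fun j _ => Real.rpow_nonneg (hx0 j) _) q
      _ ≤ (T / D) ^ q :=
          Real.rpow_le_rpow (Finset.prod_nonneg fun j _ => Real.rpow_nonneg (hx0 j) _)
            hamgm (by positivity)
  -- rewrite the right-hand side
  have hRHS : 1 - sig β / dβ β = (-m) / D := by
    rw [hsigβ, hdβ']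
    field_simp
    ring
  rw [hRHS, hdβ', ← hq]
  -- case split
  rcases le_total T (-m) with hc | hc
  · calc (∏ j, x j ^ α j) - fB x ≤ ∏ j, x j ^ α j := by linarith
      _ ≤ (T / D) ^ q := hfxq
      _ ≤ ((-m) / D) ^ q :=
          Real.rpow_le_rpow (div_nonneg hT0 hDpos.le)
            (by gcongr) (by positivity)
  · have hfBge : m + T ≤ fB x := by
      have h6 : sig β + ∑ j, β j * (x j - 1) ≤ fB x := hfBle ⟨β, hβ⟩
      rw [hsigβ, hsum_sub β] at h6
      linarith [h6]
    have hkey : (T / D) ^ q - ((-m) / D) ^ q ≤ D * (T / D - (-m) / D) :=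
      aux_rpow_sub (div_nonneg (by linarith) hDpos.le)
        (by gcongr)
        ((div_le_one hDpos).2 hTD) hq1 hqD
    have hDT : D * (T / D - (-m) / D) = T + m := by
      field_simp
      ring
    calc (∏ j, x j ^ α j) - fB x ≤ (∏ j, x j ^ α j) - (m + T) := by linarith
      _ ≤ (T / D) ^ q - (m + T) := by linarith
      _ ≤ ((-m) / D) ^ q := by linarith [hkey, hDT ▸ hkey]
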